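/- Let n ≥ 2, 0 < λ ≤ Λ < ∞, and α ∈ (0,1). Then for every A ∈ 𝒜(λ,Λ) there exists Q ∈ O(n) such that trace{ J_α (2A − 2 A^{1/2} Q A^{1/2}) } ≤ −4(1−α)λ; in particular, the minimum over Q ∈ O(n) of this trace is at most −4(1−α)λ, and hence is strictly negative independently of the ellipticity constants. -/

import Mathlib

open MeasureTheory Matrix

noncomputable section

abbrev EucSp (n : ℕ) := EuclideanSpace ℝ (Fin n)

/-- Principal square root of a positive semidefinite matrix (zero otherwise). -/
noncomputable def msqrt {n : ℕ} (A : Matrix (Fin n) (Fin n) ℝ) : Matrix (Fin n) (Fin n) ℝ :=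
  open scoped Classical in
  if h : A.PosSemidef then
    (h.1.eigenvectorUnitary : Matrix (Fin n) (Fin n) ℝ) *
      Matrix.diagonal (fun i => Real.sqrt (h.1.eigenvalues i)) *
      (star h.1.eigenvectorUnitary : Matrix (Fin n) (Fin n) ℝ)
  else 0

/-- `A ∈ 𝒜(λ,Λ)`: symmetric and uniformly elliptic. -/
def UnifElliptic {n : ℕ} (lam Lam : ℝ) (A : Matrix (Fin n) (Fin n) ℝ) : Prop :=
  A.IsSymm ∧ ∀ ξ : Fin n → ℝ,
    lam * (ξ ⬝ᵥ ξ) ≤ ξ ⬝ᵥ A.mulVec ξ ∧ ξ ⬝ᵥ A.mulVec ξ ≤ Lam * (ξ ⬝ᵥ ξ)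

/-- Membership in the orthogonal group `O(n)`. -/
def IsOrthMat {n : ℕ} (Q : Matrix (Fin n) (Fin n) ℝ) : Prop :=
  Q * Qᵀ = 1 ∧ Qᵀ * Q = 1

/-- Matrix acting on Euclidean space. -/
noncomputable def mvE {n : ℕ} (M : Matrix (Fin n) (Fin n) ℝ) (y : EucSp n) : EucSp n :=
  (EuclideanSpace.equiv (Fin n) ℝ).symm (M.mulVec ((EuclideanSpace.equiv (Fin n) ℝ) y))

/-- The ellipsoid `x + ε A^{1/2} 𝔹`. -/
noncomputable def ellipsoid {n : ℕ} (ε : ℝ) (M : Matrix (Fin n) (Fin n) ℝ) (x : EucSp n) :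
    Set (EucSp n) :=
  (fun y => x + ε • mvE (msqrt M) y) '' Metric.ball (0 : EucSp n) 1

/-- The matrix `J_α = diag(α-1, 1, …, 1)`. -/
noncomputable def Jmat (n : ℕ) (α : ℝ) : Matrix (Fin n) (Fin n) ℝ :=
  Matrix.diagonal (fun i => if (i : ℕ) = 0 then α - 1 else 1)

/-- Reflection in the first coordinate axis. -/
noncomputable def J0 (n : ℕ) : Matrix (Fin n) (Fin n) ℝ :=
  Matrix.diagonal (fun i => if (i : ℕ) = 0 then -1 else 1)

/-- The first standard basis vector `e₁`. -/
noncomputable def e1 (n : ℕ) : EucSp n :=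
  (EuclideanSpace.equiv (Fin n) ℝ).symm (fun i => if (i : ℕ) = 0 then 1 else 0)

/-- `f₁(x,z) = C|x-z|^α + C̃|x+z|²`. -/
noncomputable def f1 {n : ℕ} (α C Ct : ℝ) (x z : EucSp n) : ℝ :=
  C * ‖x - z‖ ^ α + Ct * ‖x + z‖ ^ 2

/-- The annular step function `f₂`. -/
noncomputable def f2 {n : ℕ} (α C lam ε : ℝ) (N : ℕ) (x z : EucSp n) : ℝ :=
  if ‖x - z‖ / (Real.sqrt lam * ε) > (N : ℝ) then 0
  else C ^ (2 * (2 * N - ⌈2 * ‖x - z‖ / (Real.sqrt lam * ε)⌉₊)) * ε ^ α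

theorem sandwich_aux {n : ℕ} (S : Matrix (Fin n) (Fin n) ℝ) (u e : Fin n → ℝ)
    (hS : S.IsSymm) (hSu : S *ᵥ u = e) :
    S * Matrix.vecMulVec u u * S = Matrix.vecMulVec e e := by
  ext i j
  simp only [mul_apply, vecMulVec_apply, ← hSu, mulVec, dotProduct]
  calc ∑ k, (∑ l, S i l * (u l * u k)) * S k j
      = ∑ k, ∑ l, (S i l * u l) * (S j k * u k) := by
        refine Finset.sum_congr rfl fun k _ => ?_
        rw [Finset.sum_mul]
        refine Finset.sum_congr rfl fun l _ => ?_
        rw [hS.apply k j]; ring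
    _ = ∑ l, ∑ k, (S i l * u l) * (S j k * u k) := Finset.sum_comm
    _ = (∑ l, S i l * u l) * (∑ k, S j k * u k) := by
        simp only [← Finset.mul_sum, ← Finset.sum_mul]

theorem vmv_sq_aux {n : ℕ} (u : Fin n → ℝ) :
    Matrix.vecMulVec u u * Matrix.vecMulVec u u = (u ⬝ᵥ u) • Matrix.vecMulVec u u := by
  ext i j
  simp only [mul_apply, vecMulVec_apply, Matrix.smul_apply, smul_eq_mul, dotProduct]
  rw [Finset.sum_mul]
  exact Finset.sum_congr rfl fun k _ => by ring

theorem htr_aux {n : ℕ} (α c : ℝ) (i0 : Fin n) (hi0 : (i0 : ℕ) = 0) :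
    Matrix.trace (Jmat n α * ((4 / c) • Matrix.vecMulVec (Pi.single i0 1) (Pi.single i0 1)))
      = (4 / c) * (α - 1) := by
  rw [Matrix.trace]
  simp only [Matrix.diag_apply, Matrix.mul_apply, Jmat, Matrix.diagonal_apply,
    Matrix.smul_apply, vecMulVec_apply, Pi.single_apply, smul_eq_mul]
  rw [Finset.sum_eq_single i0]
  · simp [hi0, mul_comm]
  · intro b _ hb
    rw [Finset.sum_eq_zero]
    intro k _
    by_cases hk : k = b
    · subst hk
      have : ¬ k = i0 := hb
      simp [this]
    · simp [Ne.symm hk]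
  · simp

/-- Core argument with the square root as an opaque matrix `S`. -/
theorem core_aux {n : ℕ} (hn : 2 ≤ n) (lam α : ℝ)
    (hα : α ∈ Set.Ioo (0 : ℝ) 1)
    (A S : Matrix (Fin n) (Fin n) ℝ)
    (hSsym : S.IsSymm) (hSS : S * S = A) (hdetS : IsUnit S.det)
    (hA : ∀ ξ : Fin n → ℝ, lam * (ξ ⬝ᵥ ξ) ≤ ξ ⬝ᵥ A.mulVec ξ) :
    ∃ Q, IsOrthMat Q ∧
      Matrix.trace (Jmat n α * ((2 : ℝ) • A - (2 : ℝ) • (S * Q * S))) ≤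
        -(4 * (1 - α) * lam) := by
  obtain ⟨i0, hi0⟩ : ∃ i0 : Fin n, (i0 : ℕ) = 0 := ⟨⟨0, by omega⟩, rfl⟩
  set e : Fin n → ℝ := Pi.single i0 1 with he
  obtain ⟨u, hSu⟩ : ∃ u, S *ᵥ u = e :=
    ⟨S⁻¹ *ᵥ e, by rw [Matrix.mulVec_mulVec, Matrix.mul_nonsing_inv _ hdetS, Matrix.one_mulVec]⟩
  have hee : e ⬝ᵥ e = 1 := by simp [he, dotProduct, Pi.single_apply]
  set c : ℝ := u ⬝ᵥ u with hc
  have hu0 : u ≠ 0 := by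
    intro h
    rw [h, Matrix.mulVec_zero] at hSu
    have h0 : e i0 = 0 := by rw [← hSu]; rfl
    simp [he] at h0
  have hcpos : 0 < c := by
    rcases Function.ne_iff.mp hu0 with ⟨i, hi⟩
    simp only [Pi.zero_apply] at hi
    have hpos : 0 < u i * u i :=
      mul_pos_iff.mpr (by rcases lt_or_gt_of_ne hi with h | h <;> [right; left] <;> exact ⟨h, h⟩)
    calc 0 < u i * u i := hpos
      _ ≤ c := Finset.single_le_sum (f := fun j => u j * u j)
          (fun j _ => mul_self_nonneg _) (Finset.mem_univ i)
  have hc0 : c ≠ 0 := hcpos.ne'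
  have hlamc : lam * c ≤ 1 := by
    have h1 := hA u
    have hAu : u ⬝ᵥ A *ᵥ u = 1 := by
      rw [← hSS, ← Matrix.mulVec_mulVec, hSu, Matrix.dotProduct_mulVec,
        ← Matrix.mulVec_transpose, hSsym.eq, hSu, hee]
    rw [hAu] at h1
    exact h1
  set M : Matrix (Fin n) (Fin n) ℝ := Matrix.vecMulVec u u with hM
  refine ⟨1 - (2 / c) • M, ?_, ?_⟩
  · have hMsym : Mᵀ = M := by
      ext i j; simp [hM, vecMulVec_apply, mul_comm]
    have hQsym : (1 - (2 / c) • M)ᵀ = 1 - (2 / c) • M := by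
      rw [Matrix.transpose_sub, Matrix.transpose_smul, hMsym, Matrix.transpose_one]
    have hQQ : (1 - (2 / c) • M) * (1 - (2 / c) • M) = 1 := by
      have key : (2 / c) * (2 / c * c) = 2 / c + 2 / c := by field_simp; ring
      rw [hM]
      simp only [sub_mul, mul_sub, one_mul, mul_one, smul_mul_assoc, mul_smul_comm, smul_smul]
      rw [vmv_sq_aux, ← hc, smul_smul, smul_sub, smul_smul, key, add_smul]
      abel
    exact ⟨by rw [hQsym]; exact hQQ, by rw [hQsym]; exact hQQ⟩
  · have hSQS : S * (1 - (2 / c) • M) * S = A - (2 / c) • Matrix.vecMulVec e e := by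
      rw [mul_sub, sub_mul, mul_one, Matrix.mul_smul, Matrix.smul_mul, hM,
        sandwich_aux S u e hSsym hSu, hSS]
    rw [hSQS]
    have hdiff : (2 : ℝ) • A - (2 : ℝ) • (A - (2 / c) • Matrix.vecMulVec e e)
        = (4 / c) • Matrix.vecMulVec e e := by
      rw [smul_sub, smul_smul]
      have h24 : (2 : ℝ) * (2 / c) = 4 / c := by ring
      rw [h24]
      abel
    rw [hdiff, he, htr_aux α c i0 hi0]
    have h1α : 0 < 1 - α := by linarith [hα.2]
    have hkey : 4 * (1 - α) * lam ≤ 4 * (1 - α) / c := by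
      rw [le_div_iff₀ hcpos]
      nlinarith
    have heq : (4 / c) * (α - 1) = -(4 * (1 - α) / c) := by ring
    rw [heq]
    linarith

/-- negativity of the optimal coupling trace in the constant
coefficient case (inequality (4.18)). -/
theorem stmt8 {n : ℕ} (hn : 2 ≤ n)
    (lam Lam : ℝ) (hlam : 0 < lam) (hlL : lam ≤ Lam)
    (α : ℝ) (hα : α ∈ Set.Ioo (0 : ℝ) 1) :
    ∀ A : Matrix (Fin n) (Fin n) ℝ, UnifElliptic lam Lam A →
      ∃ Q, IsOrthMat Q ∧
        Matrix.trace (Jmat n α *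
            ((2 : ℝ) • A - (2 : ℝ) • (msqrt A * Q * msqrt A))) ≤
          -(4 * (1 - α) * lam) := by
  rintro A ⟨hsym, hA⟩
  have hHerm : A.IsHermitian := by
    show Aᴴ = A
    rw [show Aᴴ = Aᵀ from by ext i j; simp [conjTranspose_apply]]
    exact hsym
  have hPSD : A.PosSemidef := by
    refine Matrix.PosSemidef.of_dotProduct_mulVec_nonneg hHerm fun x => ?_
    have h1 := (hA x).1
    have h0 : 0 ≤ lam * (x ⬝ᵥ x) :=
      mul_nonneg hlam.le (Finset.sum_nonneg fun i _ => mul_self_nonneg _)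
    simpa using h0.trans h1
  have hmsqrt : msqrt A = (hPSD.1.eigenvectorUnitary : Matrix (Fin n) (Fin n) ℝ) *
      Matrix.diagonal (fun i => Real.sqrt (hPSD.1.eigenvalues i)) *
      (star hPSD.1.eigenvectorUnitary : Matrix (Fin n) (Fin n) ℝ) := by rw [msqrt, dif_pos hPSD]
  have hSS : msqrt A * msqrt A = A := by
    rw [hmsqrt]
    have hU : (star hPSD.1.eigenvectorUnitary : Matrix (Fin n) (Fin n) ℝ) *
        (hPSD.1.eigenvectorUnitary : Matrix (Fin n) (Fin n) ℝ) = 1 :=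
      Unitary.coe_star_mul_self _
    have hD : Matrix.diagonal (fun i => Real.sqrt (hPSD.1.eigenvalues i)) *
        Matrix.diagonal (fun i => Real.sqrt (hPSD.1.eigenvalues i)) =
        Matrix.diagonal (RCLike.ofReal ∘ hPSD.1.eigenvalues) := by
      rw [Matrix.diagonal_mul_diagonal]
      congr 1
      funext i
      simp [Real.mul_self_sqrt (hPSD.eigenvalues_nonneg i)]
    conv_rhs => rw [hHerm.spectral_theorem, Unitary.conjStarAlgAut_apply, ← hD]
    simp only [Matrix.mul_assoc]
    rw [← Matrix.mul_assoc (star _) _ (Matrix.diagonal _ * _), hU, Matrix.one_mul]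
  have hSsym : (msqrt A).IsSymm := by
    show (msqrt A)ᵀ = msqrt A
    rw [show (msqrt A)ᵀ = (msqrt A)ᴴ from by ext i j; simp [conjTranspose_apply], hmsqrt]
    simp [Matrix.conjTranspose_mul, Matrix.star_eq_conjTranspose, Matrix.mul_assoc]
  have hdetA : 0 < A.det := by
    refine Matrix.PosDef.det_pos (Matrix.PosDef.of_dotProduct_mulVec_pos hHerm fun x hx => ?_)
    have h1 := (hA x).1
    have hxx : 0 < x ⬝ᵥ x := by
      rcases Function.ne_iff.mp hx with ⟨i, hi⟩
      have hpos : 0 < x i * x i :=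
        mul_pos_iff.mpr (by rcases lt_or_gt_of_ne hi with h | h <;> [right; left] <;> exact ⟨h, h⟩)
      calc 0 < x i * x i := hpos
        _ ≤ x ⬝ᵥ x := Finset.single_le_sum (f := fun j => x j * x j)
            (fun j _ => mul_self_nonneg _) (Finset.mem_univ i)
    simpa using (mul_pos hlam hxx).trans_le h1
  have hdetS : IsUnit (msqrt A).det := by
    have hds : (msqrt A).det * (msqrt A).det = A.det := by rw [← det_mul, hSS]
    exact isUnit_iff_ne_zero.mpr fun h => hdetA.ne (by simp [h] at hds; exact hds)
  exact core_aux hn lam α hα A (msqrt A) hSsym hSS hdetS (fun ξ => (hA ξ).1)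

end
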